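/- Let Δ be a finite abstract simplicial complex on the vertex set {1,…,N} and let τ ∈ Δ be a face with j = |τ| ≥ 2. Let Δ̂ be the star subdivision of Δ at τ with new vertex 0. Then the ℝ-algebra map ℝ[∂_1,…,∂_N] → ℝ[∂_0, ∂_1,…,∂_N] sending ∂_i ↦ ∂_i + ∂_0 for i ∈ τ and ∂_i ↦ ∂_i for i ∉ τ induces a well-defined injective ring homomorphism π* : 𝒜(Δ) → 𝒜(Δ̂) between the Stanley–Reisner rings, and 𝒜(Δ̂) is the internal direct sum of ℝ-vector subspaces 𝒜(Δ̂) = π*(𝒜(Δ)) ⊕ ∂_0·π*(𝒜(Δ)) ⊕ ∂_0²·π*(𝒜(Δ)) ⊕ ⋯ ⊕ ∂_0^{j−1}·π*(𝒜(Δ)). -/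

import Mathlib

open MvPolynomial

/-- The Stanley–Reisner ideal of a collection `Δ` of subsets of a vertex type `V`:
the ideal generated by the monomials `∏_{s∈T} ∂_s` over non-faces `T ∉ Δ`. -/
noncomputable def srIdealOf (V : Type*) (isFace : Finset V → Prop) :
    Ideal (MvPolynomial V ℝ) :=
  Ideal.span {p | ∃ T : Finset V, ¬ isFace T ∧ p = ∏ s ∈ T, X s}

/-- The faces of the star subdivision `Δ̂` of `Δ` at the face `τ`, with new vertex
`none`: the faces `σ ∈ Δ` with `τ ⊄ σ` (embedded via `some`), together with
`{none} ∪ σ` for those `σ ∈ Δ` with `τ ⊄ σ` and `σ ∪ τ ∈ Δ`. -/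
def starSubdivFace (N : ℕ) (Δ : Finset (Finset (Fin N))) (τ : Finset (Fin N))
    (T : Finset (Option (Fin N))) : Prop :=
  (∃ σ ∈ Δ, ¬ τ ⊆ σ ∧ T = σ.image some) ∨
  (∃ σ ∈ Δ, ¬ τ ⊆ σ ∧ σ ∪ τ ∈ Δ ∧ T = insert none (σ.image some))

namespace SR16

variable {N : ℕ} (Δ : Finset (Finset (Fin N))) (τ : Finset (Fin N))

abbrev R (N : ℕ) := MvPolynomial (Fin N) ℝ
abbrev Rh (N : ℕ) := MvPolynomial (Option (Fin N)) ℝ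
abbrev P (N : ℕ) := Polynomial (R N)

noncomputable def ψ : R N →ₐ[ℝ] Rh N :=
  aeval fun i => if i ∈ τ then X (some i) + X (none : Option (Fin N)) else X (some i)

noncomputable def θ : Rh N →ₐ[ℝ] Rh N :=
  aeval fun o => o.elim (X none) fun i => if i ∈ τ then X (some i) - X none else X (some i)

noncomputable def θ' : Rh N →ₐ[ℝ] Rh N :=
  aeval fun o => o.elim (X none) fun i => if i ∈ τ then X (some i) + X none else X (some i)

noncomputable def θe : Rh N ≃ₐ[ℝ] Rh N :=
  AlgEquiv.ofAlgHom (θ τ) (θ' τ)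
    (by apply MvPolynomial.algHom_ext; rintro (_ | i) <;> simp [θ, θ'] <;> split <;>
        simp [*])
    (by apply MvPolynomial.algHom_ext; rintro (_ | i) <;> simp [θ, θ'] <;> split <;>
        simp [*])

noncomputable def ρ : Rh N ≃ₐ[ℝ] P N :=
  (θe τ).trans (optionEquivLeft ℝ (Fin N))

lemma ρ_X_none : ρ τ (X (none : Option (Fin N))) = Polynomial.X := by
  simp [ρ, θe, θ, AlgEquiv.ofAlgHom]

lemma ρ_X_some (i : Fin N) :
    ρ τ (X (some i)) =
      if i ∈ τ then Polynomial.C (X i) - Polynomial.X else Polynomial.C (X i) := by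
  simp only [ρ, θe, AlgEquiv.ofAlgHom, AlgEquiv.trans_apply]
  simp [θ]
  split <;> simp

lemma ψ_X (i : Fin N) :
    ψ τ (X i) = if i ∈ τ then X (some i) + X (none : Option (Fin N)) else X (some i) := by
  simp [ψ]

lemma ρ_ψ (p : R N) : ρ τ (ψ τ p) = Polynomial.C p := by
  have : (((ρ τ).toAlgHom.comp (ψ τ)) : R N →ₐ[ℝ] P N) =
      IsScalarTower.toAlgHom ℝ (R N) (P N) := by
    apply MvPolynomial.algHom_ext
    intro i
    simp only [AlgHom.comp_apply, AlgEquiv.toAlgHom_eq_coe, AlgHom.coe_coe, ψ_X]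
    split <;> simp [ρ_X_some, ρ_X_none, Polynomial.algebraMap_eq, *]
  have h2 := congrArg (fun f => (f : R N →ₐ[ℝ] P N) p) this
  simpa [Polynomial.algebraMap_eq] using h2


/-- Abstract expansion lemma: `∏ (aᵢ + [d if P i]) - ∏ aᵢ` lies in the ideal generated
by `d * ∏_{T} aᵢ` for `T` between `S.filter (¬P ·)` and `S`. -/
lemma genLemma {A ι : Type*} [CommRing A] [DecidableEq ι] (Pp : ι → Prop) [DecidablePred Pp]
    (a : ι → A) (d : A) (S : Finset ι) :
    (∏ i ∈ S, (a i + if Pp i then d else 0)) - ∏ i ∈ S, a i ∈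
      Ideal.span {x | ∃ T : Finset ι, S.filter (fun i => ¬ Pp i) ⊆ T ∧ T ⊆ S ∧
        x = d * ∏ i ∈ T, a i} := by
  classical
  induction S using Finset.induction_on with
  | empty => simp
  | @insert i S hiS ih =>
    rw [Finset.prod_insert hiS, Finset.prod_insert hiS]
    have key : ∀ x ∈ Ideal.span {x | ∃ T : Finset ι, S.filter (fun i => ¬ Pp i) ⊆ T ∧ T ⊆ S ∧
        x = d * ∏ i ∈ T, a i},
        a i * x ∈ Ideal.span {x | ∃ T : Finset ι,
          (insert i S).filter (fun i => ¬ Pp i) ⊆ T ∧ T ⊆ insert i S ∧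
          x = d * ∏ i ∈ T, a i} := by
      intro x hx
      induction hx using Submodule.span_induction with
      | mem x hxx =>
        obtain ⟨T, hT1, hT2, rfl⟩ := hxx
        have hiT : i ∉ T := fun h => hiS (hT2 h)
        apply Ideal.subset_span
        refine ⟨insert i T, ?_, Finset.insert_subset_insert _ hT2, ?_⟩
        · rw [Finset.filter_insert]
          split
          · exact Finset.insert_subset_insert _ hT1
          · exact hT1.trans (Finset.subset_insert _ _)
        · rw [Finset.prod_insert hiT]; ring
      | zero => simp
      | add x y _ _ hx hy => rw [mul_add]; exact Ideal.add_mem _ hx hy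
      | smul r x _ hx =>
        have h : a i * (r • x) = r * (a i * x) := by rw [smul_eq_mul]; ring
        rw [h]
        exact Ideal.mul_mem_left _ _ hx
    have hident : (a i + (if Pp i then d else 0)) * (∏ j ∈ S, (a j + if Pp j then d else 0))
        - a i * ∏ j ∈ S, a j
        = a i * ((∏ j ∈ S, (a j + if Pp j then d else 0)) - ∏ j ∈ S, a j)
          + ((if Pp i then d else 0) * (∏ j ∈ S, a j)
          + (if Pp i then d else 0) * ((∏ j ∈ S, (a j + if Pp j then d else 0)) - ∏ j ∈ S, a j)) := by
      ring
    rw [hident]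
    refine Ideal.add_mem _ (key _ ih) (Ideal.add_mem _ ?_ ?_)
    · split
      · apply Ideal.subset_span
        refine ⟨S, ?_, Finset.subset_insert _ _, rfl⟩
        rw [Finset.filter_insert, if_neg (by simpa [*])]
        exact Finset.filter_subset _ _
      · simp
    · split
      · apply Ideal.mul_mem_left
        refine Ideal.span_mono ?_ ih
        rintro x ⟨T, h1, h2, rfl⟩
        refine ⟨T, ?_, h2.trans (Finset.subset_insert _ _), rfl⟩
        rw [Finset.filter_insert, if_neg (by simpa [*])]
        exact h1
      · simp


noncomputable def IΔ : Ideal (R N) := srIdealOf (Fin N) (· ∈ Δ)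

noncomputable def Ih : Ideal (Rh N) := srIdealOf (Option (Fin N)) (starSubdivFace N Δ τ)

noncomputable def KK : Ideal (R N) :=
  Ideal.span {p | ∃ S : Finset (Fin N), S ∪ τ ∉ Δ ∧ p = ∏ i ∈ S, X i}

noncomputable def G : P N := ∏ i ∈ τ, (Polynomial.X - Polynomial.C (X i))

noncomputable def J : Ideal (P N) :=
  Ideal.span ({p | ∃ S : Finset (Fin N), S ∉ Δ ∧ p = Polynomial.C (∏ i ∈ S, X i)} ∪
    {G τ} ∪
    {p | ∃ S : Finset (Fin N), S ∪ τ ∉ Δ ∧ p = Polynomial.X * Polynomial.C (∏ i ∈ S, X i)})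

/-- monomials of non-faces of the subdivision not containing the new vertex -/
lemma mhat_mem (S : Finset (Fin N)) (h : S ∉ Δ ∨ τ ⊆ S) :
    (∏ i ∈ S, X (some i) : Rh N) ∈ Ih Δ τ := by
  apply Ideal.subset_span
  refine ⟨S.image some, ?_, ?_⟩
  · rintro (⟨σ, hσ, hτσ, heq⟩ | ⟨σ, hσ, hτσ, hστ, heq⟩)
    · have : S = σ := Finset.image_injective (Option.some_injective _) heq
      subst this
      rcases h with h | h
      · exact h hσ
      · exact hτσ h
    · have : none ∈ S.image some := heq ▸ Finset.mem_insert_self _ _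
      simp at this
  · rw [Finset.prod_image (fun a _ b _ h => Option.some_injective _ h)]

lemma x0_mhat_mem (S : Finset (Fin N)) (h : S ∪ τ ∉ Δ) :
    (X none * ∏ i ∈ S, X (some i) : Rh N) ∈ Ih Δ τ := by
  apply Ideal.subset_span
  refine ⟨insert none (S.image some), ?_, ?_⟩
  · rintro (⟨σ, hσ, hτσ, heq⟩ | ⟨σ, hσ, hτσ, hστ, heq⟩)
    · have : none ∈ σ.image some := heq ▸ Finset.mem_insert_self _ _
      simp at this
    · have hS : S.image some = σ.image some := by
        have h1 : (insert none (S.image some)).erase none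
            = (insert none (σ.image some)).erase none := by rw [heq]
        rwa [Finset.erase_insert (by simp), Finset.erase_insert (by simp)] at h1
      have : S = σ := Finset.image_injective (Option.some_injective _) hS
      subst this
      exact h hστ
  · rw [Finset.prod_insert (by simp),
      Finset.prod_image (fun a _ b _ h => Option.some_injective _ h)]

lemma union_eq_of_between {S T : Finset (Fin N)}
    (h1 : S.filter (fun i => ¬ i ∈ τ) ⊆ T) (h2 : T ⊆ S) : T ∪ τ = S ∪ τ := by
  apply Finset.Subset.antisymm
  · exact Finset.union_subset_union_left h2
  · intro x hx
    rcases Finset.mem_union.mp hx with hx | hx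
    · by_cases hxτ : x ∈ τ
      · exact Finset.mem_union_right _ hxτ
      · exact Finset.mem_union_left _ (h1 (Finset.mem_filter.mpr ⟨hx, hxτ⟩))
    · exact Finset.mem_union_right _ hx

/-- expansion of `ψ` of a squarefree monomial -/
lemma psi_expand (S : Finset (Fin N)) :
    ψ τ (∏ i ∈ S, X i) - (∏ i ∈ S, X (some i) : Rh N) ∈
      Ideal.span {x : Rh N | ∃ T : Finset (Fin N), S.filter (fun i => ¬ i ∈ τ) ⊆ T ∧ T ⊆ S ∧
        x = X none * ∏ i ∈ T, X (some i)} := by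
  classical
  have h := genLemma (fun i : Fin N => i ∈ τ) (fun i => (X (some i) : Rh N)) (X none) S
  have heq : ψ τ (∏ i ∈ S, X i)
      = ∏ i ∈ S, ((X (some i) : Rh N) + if i ∈ τ then X none else 0) := by
    rw [map_prod]
    refine Finset.prod_congr rfl fun i _ => ?_
    rw [ψ_X]
    split <;> simp
  rw [heq]
  exact h

lemma psi_mem (hΔ : ∀ σ ∈ Δ, ∀ τ' ⊆ σ, τ' ∈ Δ) (S : Finset (Fin N)) (h : S ∉ Δ) :
    ψ τ (∏ i ∈ S, X i) ∈ Ih Δ τ := by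
  have h1 := psi_expand τ S
  have h2 : Ideal.span {x : Rh N | ∃ T : Finset (Fin N), S.filter (fun i => ¬ i ∈ τ) ⊆ T ∧
      T ⊆ S ∧ x = X none * ∏ i ∈ T, X (some i)} ≤ Ih Δ τ := by
    rw [Ideal.span_le]
    rintro x ⟨T, hT1, hT2, rfl⟩
    have hTτ : T ∪ τ ∉ Δ := by
      intro hc
      exact h (hΔ _ hc S (by
        have := union_eq_of_between τ hT1 hT2
        rw [this]
        exact Finset.subset_union_left))
    exact x0_mhat_mem Δ τ T hTτ
  have h3 : ψ τ (∏ i ∈ S, X i)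
      = ((∏ i ∈ S, X (some i) : Rh N)) + (ψ τ (∏ i ∈ S, X i) - ∏ i ∈ S, X (some i)) := by
    ring
  rw [h3]
  exact Ideal.add_mem _ (mhat_mem Δ τ S (Or.inl h)) (h2 h1)

lemma x0_psi_mem (S : Finset (Fin N)) (h : S ∪ τ ∉ Δ) :
    (X none : Rh N) * ψ τ (∏ i ∈ S, X i) ∈ Ih Δ τ := by
  have h1 := psi_expand τ S
  have h2 : Ideal.span {x : Rh N | ∃ T : Finset (Fin N), S.filter (fun i => ¬ i ∈ τ) ⊆ T ∧
      T ⊆ S ∧ x = X none * ∏ i ∈ T, X (some i)} ≤ Ih Δ τ := by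
    rw [Ideal.span_le]
    rintro x ⟨T, hT1, hT2, rfl⟩
    exact x0_mhat_mem Δ τ T (by rw [union_eq_of_between τ hT1 hT2]; exact h)
  have h3 : (X none : Rh N) * ψ τ (∏ i ∈ S, X i)
      = X none * (∏ i ∈ S, X (some i))
        + X none * (ψ τ (∏ i ∈ S, X i) - ∏ i ∈ S, X (some i)) := by ring
  rw [h3]
  exact Ideal.add_mem _ (x0_mhat_mem Δ τ S h) (Ideal.mul_mem_left _ _ (h2 h1))


noncomputable def gS (S : Finset (Fin N)) : P N :=
  ∏ i ∈ S, (if i ∈ τ then Polynomial.C (X i) - Polynomial.X else Polynomial.C (X i))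

lemma rho_mhat (S : Finset (Fin N)) :
    ρ τ (∏ i ∈ S, X (some i)) = gS τ S := by
  rw [map_prod]
  exact Finset.prod_congr rfl fun i _ => ρ_X_some τ i

lemma prod_tau_eq : gS τ τ = (-1 : P N) ^ τ.card * G τ := by
  unfold gS G
  have h : ∀ i ∈ τ, (if i ∈ τ then Polynomial.C (X i) - Polynomial.X else Polynomial.C (X i))
      = (-1 : P N) * (Polynomial.X - Polynomial.C (X i)) := by
    intro i hi; rw [if_pos hi]; ring
  calc ∏ i ∈ τ, (if i ∈ τ then Polynomial.C (X i) - Polynomial.X else Polynomial.C (X i))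
      = ∏ i ∈ τ, ((-1 : P N) * (Polynomial.X - Polynomial.C (X i))) :=
        Finset.prod_congr rfl h
    _ = (∏ _i ∈ τ, (-1 : P N)) * ∏ i ∈ τ, (Polynomial.X - Polynomial.C (X i)) :=
        Finset.prod_mul_distrib
    _ = (-1 : P N) ^ τ.card * ∏ i ∈ τ, (Polynomial.X - Polynomial.C (X i)) := by
        rw [Finset.prod_const]

lemma gS_dvd (S : Finset (Fin N)) (hτS : τ ⊆ S) : ∃ c, gS τ S = c * G τ := by
  classical
  refine ⟨(-1 : P N) ^ τ.card *
    ∏ i ∈ S.filter (fun i => ¬ i ∈ τ), Polynomial.C (X i), ?_⟩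
  unfold gS
  have h0 : (∏ i ∈ S.filter (fun i => i ∈ τ),
        (if i ∈ τ then Polynomial.C (X i) - Polynomial.X else Polynomial.C (X i) : P N)) *
      ∏ i ∈ S.filter (fun i => ¬ i ∈ τ),
        (if i ∈ τ then Polynomial.C (X i) - Polynomial.X else Polynomial.C (X i) : P N)
      = ∏ i ∈ S,
        (if i ∈ τ then Polynomial.C (X i) - Polynomial.X else Polynomial.C (X i) : P N) :=
    Finset.prod_filter_mul_prod_filter_not S _ _
  rw [← h0]
  have h1 : S.filter (fun i => i ∈ τ) = τ := by
    ext i; simp only [Finset.mem_filter]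
    exact ⟨fun h => h.2, fun h => ⟨hτS h, h⟩⟩
  have h2 : ∏ i ∈ S.filter (fun i => ¬ i ∈ τ),
      (if i ∈ τ then Polynomial.C (X i) - Polynomial.X else Polynomial.C (X i) : P N)
      = ∏ i ∈ S.filter (fun i => ¬ i ∈ τ), (Polynomial.C (X i) : P N) := by
    refine Finset.prod_congr rfl fun i hi => ?_
    rw [if_neg (Finset.mem_filter.mp hi).2]
  rw [h1, h2]
  have h3 := prod_tau_eq τ
  unfold gS at h3
  rw [h3]; ring

lemma gS_expand (S : Finset (Fin N)) :
    gS τ S - Polynomial.C (∏ i ∈ S, X i) ∈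
      Ideal.span {x : P N | ∃ T : Finset (Fin N), S.filter (fun i => ¬ i ∈ τ) ⊆ T ∧ T ⊆ S ∧
        x = (-Polynomial.X) * ∏ i ∈ T, Polynomial.C (X i)} := by
  classical
  have h := genLemma (fun i : Fin N => i ∈ τ)
    (fun i => (Polynomial.C (X i) : P N)) (-Polynomial.X) S
  have heq : gS τ S
      = ∏ i ∈ S, ((Polynomial.C (X i) : P N) + if i ∈ τ then -Polynomial.X else 0) := by
    unfold gS
    refine Finset.prod_congr rfl fun i _ => ?_
    split <;> ring
  have heq2 : (∏ i ∈ S, (Polynomial.C (X i) : P N)) = Polynomial.C (∏ i ∈ S, X i) := by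
    rw [map_prod]
  rw [heq, ← heq2]
  exact h

lemma diffspan_le (S : Finset (Fin N)) (h : S ∪ τ ∉ Δ) :
    Ideal.span {x : P N | ∃ T : Finset (Fin N), S.filter (fun i => ¬ i ∈ τ) ⊆ T ∧ T ⊆ S ∧
        x = (-Polynomial.X) * ∏ i ∈ T, Polynomial.C (X i)} ≤ J Δ τ := by
  rw [Ideal.span_le]
  rintro x ⟨T, hT1, hT2, rfl⟩
  have hTτ : T ∪ τ ∉ Δ := by rw [union_eq_of_between τ hT1 hT2]; exact h
  have heq : (-Polynomial.X : P N) * ∏ i ∈ T, Polynomial.C (X i)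
      = -(Polynomial.X * Polynomial.C (∏ i ∈ T, X i)) := by
    rw [map_prod]; ring
  rw [heq]
  exact neg_mem (Ideal.subset_span (Or.inr ⟨T, hTτ, rfl⟩))

lemma CmS_mem (S : Finset (Fin N)) (h : S ∉ Δ) :
    Polynomial.C (∏ i ∈ S, X i) ∈ J Δ τ :=
  Ideal.subset_span (Or.inl (Or.inl ⟨S, h, rfl⟩))

lemma G_mem : G τ ∈ J Δ τ := Ideal.subset_span (Or.inl (Or.inr rfl))

lemma XCmS_mem (S : Finset (Fin N)) (h : S ∪ τ ∉ Δ) :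
    Polynomial.X * Polynomial.C (∏ i ∈ S, X i) ∈ J Δ τ :=
  Ideal.subset_span (Or.inr ⟨S, h, rfl⟩)

lemma gS_mem (hΔ : ∀ σ ∈ Δ, ∀ τ' ⊆ σ, τ' ∈ Δ) (S : Finset (Fin N)) (h : S ∉ Δ) :
    gS τ S ∈ J Δ τ := by
  have h3 : gS τ S = Polynomial.C (∏ i ∈ S, X i)
      + (gS τ S - Polynomial.C (∏ i ∈ S, X i)) := by ring
  rw [h3]
  have hSτ : S ∪ τ ∉ Δ := fun hc => h (hΔ _ hc S Finset.subset_union_left)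
  exact Ideal.add_mem _ (CmS_mem Δ τ S h) (diffspan_le Δ τ S hSτ (gS_expand τ S))

lemma rho_nonface_mem (hΔ : ∀ σ ∈ Δ, ∀ τ' ⊆ σ, τ' ∈ Δ) (T : Finset (Option (Fin N)))
    (hT : ¬ starSubdivFace N Δ τ T) :
    ρ τ (∏ s ∈ T, X s) ∈ J Δ τ := by
  classical
  obtain ⟨h1, h2⟩ := not_or.mp hT
  set S := T.eraseNone with hSdef
  by_cases hn : none ∈ T
  · have himg : Finset.image some S = T.erase none := Finset.image_some_eraseNone T
    have hTeq : T = insert none (S.image some) := by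
      rw [himg, Finset.insert_erase hn]
    have hprod : ρ τ (∏ s ∈ T, X s) = Polynomial.X * gS τ S := by
      rw [← Finset.mul_prod_erase T _ hn, ← himg,
        Finset.prod_image (fun a _ b _ h => Option.some_injective _ h),
        map_mul, ρ_X_none, rho_mhat]
    rw [hprod]
    by_cases hτS : τ ⊆ S
    · obtain ⟨c, hc⟩ := gS_dvd τ S hτS
      rw [hc, ← mul_assoc]
      exact Ideal.mul_mem_left _ _ (G_mem Δ τ)
    · have hSτ : S ∪ τ ∉ Δ := by
        by_cases hSΔ : S ∈ Δ
        · exact fun hc => h2 ⟨S, hSΔ, hτS, hc, hTeq⟩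
        · exact fun hc => hSΔ (hΔ _ hc S Finset.subset_union_left)
      have h3 : Polynomial.X * gS τ S
          = Polynomial.X * Polynomial.C (∏ i ∈ S, X i)
            + Polynomial.X * (gS τ S - Polynomial.C (∏ i ∈ S, X i)) := by ring
      rw [h3]
      exact Ideal.add_mem _ (XCmS_mem Δ τ S hSτ)
        (Ideal.mul_mem_left _ _ (diffspan_le Δ τ S hSτ (gS_expand τ S)))
  · have hTeq : T = S.image some := by
      rw [hSdef, Finset.image_some_eraseNone, Finset.erase_eq_of_notMem hn]
    have hprod : ρ τ (∏ s ∈ T, X s) = gS τ S := by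
      conv_lhs => rw [hTeq]
      rw [Finset.prod_image (fun a _ b _ h => Option.some_injective _ h), rho_mhat]
    rw [hprod]
    by_cases hτS : τ ⊆ S
    · obtain ⟨c, hc⟩ := gS_dvd τ S hτS
      rw [hc]
      exact Ideal.mul_mem_left _ _ (G_mem Δ τ)
    · have hSΔ : S ∉ Δ := fun hc => h1 ⟨S, hc, hτS, hTeq⟩
      exact gS_mem Δ τ hΔ S hSΔ

lemma rho_symm_G : (ρ τ).symm (G τ) = (-1 : Rh N) ^ τ.card * ∏ i ∈ τ, X (some i) := by
  have h1 : ρ τ ((-1 : Rh N) ^ τ.card * ∏ i ∈ τ, X (some i)) = G τ := by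
    rw [map_mul, rho_mhat, prod_tau_eq, map_pow]
    have h2 : ρ τ (-1 : Rh N) = -1 := by simp
    rw [h2, ← mul_assoc, ← pow_add]
    have h3 : Even (τ.card + τ.card) := ⟨τ.card, rfl⟩
    show ((-1 : P N) ^ (τ.card + τ.card)) * G τ = G τ
    have h4 := h3.neg_one_pow (α := P N)
    rw [h4, one_mul]
  rw [AlgEquiv.symm_apply_eq]
  exact h1.symm

lemma mem_Ih_iff (hΔ : ∀ σ ∈ Δ, ∀ τ' ⊆ σ, τ' ∈ Δ) (q : Rh N) :
    q ∈ Ih Δ τ ↔ ρ τ q ∈ J Δ τ := by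
  constructor
  · intro hq
    have hle : Ih Δ τ ≤ Ideal.comap (ρ τ : Rh N →+* P N) (J Δ τ) := by
      rw [Ih, srIdealOf, Ideal.span_le]
      rintro x ⟨T, hT, rfl⟩
      show ρ τ _ ∈ J Δ τ
      exact rho_nonface_mem Δ τ hΔ T hT
    exact hle hq
  · intro hq
    have hle : J Δ τ ≤ Ideal.comap ((ρ τ).symm : P N →+* Rh N) (Ih Δ τ) := by
      rw [J, Ideal.span_le]
      rintro x hx
      rcases hx with (⟨S, hS, rfl⟩ | rfl) | ⟨S, hS, rfl⟩
      · have heq : (ρ τ).symm (Polynomial.C (∏ i ∈ S, X i)) = ψ τ (∏ i ∈ S, X i) := by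
          rw [AlgEquiv.symm_apply_eq, ρ_ψ]
        show (ρ τ).symm _ ∈ Ih Δ τ
        rw [heq]
        exact psi_mem Δ τ hΔ S hS
      · show (ρ τ).symm _ ∈ Ih Δ τ
        rw [rho_symm_G]
        exact Ideal.mul_mem_left _ _ (mhat_mem Δ τ τ (Or.inr Finset.Subset.rfl))
      · have heq : (ρ τ).symm (Polynomial.X * Polynomial.C (∏ i ∈ S, X i))
            = X none * ψ τ (∏ i ∈ S, X i) := by
          rw [AlgEquiv.symm_apply_eq, map_mul, ρ_X_none, ρ_ψ]
        show (ρ τ).symm _ ∈ Ih Δ τ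
        rw [heq]
        exact x0_psi_mem Δ τ S hS
    have := hle hq
    simpa using this


noncomputable def MI : Ideal (P N) where
  carrier := {q | q.coeff 0 ∈ IΔ Δ ∧ ∀ k, k ≠ 0 → q.coeff k ∈ IΔ Δ ⊔ KK Δ τ}
  add_mem' := by
    rintro a b ⟨ha0, ha⟩ ⟨hb0, hb⟩
    exact ⟨by rw [Polynomial.coeff_add]; exact add_mem ha0 hb0,
      fun k hk => by rw [Polynomial.coeff_add]; exact add_mem (ha k hk) (hb k hk)⟩
  zero_mem' := ⟨by simp, fun k _ => by simp⟩
  smul_mem' := by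
    intro c x hx
    constructor
    · rw [smul_eq_mul, Polynomial.mul_coeff_zero]
      exact Ideal.mul_mem_left _ _ hx.1
    · intro k hk
      rw [smul_eq_mul, Polynomial.coeff_mul]
      refine Submodule.sum_mem _ ?_
      rintro ⟨i, j⟩ hij
      by_cases hj : j = 0
      · subst hj
        exact Ideal.mul_mem_left _ _ (Ideal.mem_sup_left hx.1)
      · exact Ideal.mul_mem_left _ _ (hx.2 j hj)

lemma mem_MI_iff (q : P N) :
    q ∈ MI Δ τ ↔ q.coeff 0 ∈ IΔ Δ ∧ ∀ k, k ≠ 0 → q.coeff k ∈ IΔ Δ ⊔ KK Δ τ :=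
  Iff.rfl

lemma IΔ_le_KK (hΔ : ∀ σ ∈ Δ, ∀ τ' ⊆ σ, τ' ∈ Δ) : IΔ Δ ≤ KK Δ τ := by
  rw [IΔ, srIdealOf, Ideal.span_le]
  rintro x ⟨S, hS, rfl⟩
  exact Ideal.subset_span ⟨S, fun hc => hS (hΔ _ hc S Finset.subset_union_left), rfl⟩

lemma J_le_sup : J Δ τ ≤ MI Δ τ ⊔ Ideal.span {G τ} := by
  rw [J, Ideal.span_le]
  rintro x hx
  rcases hx with (⟨S, hS, rfl⟩ | rfl) | ⟨S, hS, rfl⟩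
  · refine Ideal.mem_sup_left ⟨?_, fun k hk => ?_⟩
    · rw [Polynomial.coeff_C, if_pos rfl]
      exact Ideal.subset_span ⟨S, hS, rfl⟩
    · rw [Polynomial.coeff_C, if_neg hk]
      exact zero_mem _
  · exact Ideal.mem_sup_right (Ideal.subset_span rfl)
  · refine Ideal.mem_sup_left ⟨?_, fun k hk => ?_⟩
    · rw [Polynomial.mul_coeff_zero, Polynomial.coeff_X_zero, zero_mul]
      exact zero_mem _
    · obtain ⟨j, rfl⟩ := Nat.exists_eq_succ_of_ne_zero hk
      rw [Polynomial.coeff_X_mul, Polynomial.coeff_C]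
      split
      · exact Ideal.mem_sup_right (Ideal.subset_span ⟨S, hS, rfl⟩)
      · exact zero_mem _

lemma G_monic : (G τ).Monic :=
  Polynomial.monic_prod_of_monic _ _ fun i _ => Polynomial.monic_X_sub_C _

lemma G_degree : (G τ).degree = (τ.card : WithBot ℕ) := by
  unfold G
  rw [Polynomial.degree_prod]
  simp [Polynomial.degree_X_sub_C]

lemma G_coeff_zero : (G τ).coeff 0 = (-1 : R N) ^ τ.card * ∏ i ∈ τ, X i := by
  unfold G
  rw [Polynomial.coeff_zero_eq_eval_zero, Polynomial.eval_prod]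
  have h : ∀ i ∈ τ, ((Polynomial.X - Polynomial.C (X i) : P N)).eval (0 : R N)
      = (-1 : R N) * X i := by
    intro i _; simp
  calc ∏ i ∈ τ, ((Polynomial.X - Polynomial.C (X i) : P N)).eval (0 : R N)
      = ∏ i ∈ τ, ((-1 : R N) * X i) := Finset.prod_congr rfl h
    _ = (∏ _i ∈ τ, (-1 : R N)) * ∏ i ∈ τ, X i := Finset.prod_mul_distrib
    _ = (-1 : R N) ^ τ.card * ∏ i ∈ τ, X i := by rw [Finset.prod_const]

lemma mtau_mul_KK (x : R N) (hx : x ∈ KK Δ τ) : (∏ i ∈ τ, X i) * x ∈ IΔ Δ := by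
  induction hx using Submodule.span_induction with
  | mem x hxx =>
    obtain ⟨S, hS, rfl⟩ := hxx
    have h1 : ((∏ i ∈ τ, X i : R N)) * ∏ i ∈ S, X i
        = (∏ i ∈ τ ∪ S, X i) * ∏ i ∈ τ ∩ S, X i := by
      classical
      rw [Finset.prod_union_inter]
    rw [h1]
    refine Ideal.mul_mem_right _ _ (Ideal.subset_span ⟨τ ∪ S, ?_, rfl⟩)
    rwa [Finset.union_comm]
  | zero => simp
  | add x y _ _ hx hy => rw [mul_add]; exact add_mem hx hy
  | smul r x _ hx =>
    rw [smul_eq_mul, mul_comm r x, ← mul_assoc]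
    exact Ideal.mul_mem_right _ _ hx

lemma KK_ne_top (hτ : τ ∈ Δ) : KK Δ τ ≠ ⊤ := by
  intro h
  have h1 : (1 : R N) ∈ KK Δ τ := h ▸ Submodule.mem_top
  have hle : KK Δ τ ≤ RingHom.ker (constantCoeff : R N →+* ℝ) := by
    rw [KK, Ideal.span_le]
    rintro x ⟨S, hS, rfl⟩
    have hne : S.Nonempty := by
      rcases S.eq_empty_or_nonempty with h | h
      · exfalso; apply hS; rwa [h, Finset.empty_union]
      · exact h
    obtain ⟨i, hi⟩ := hne
    have : constantCoeff (∏ i ∈ S, X i : R N) = 0 := by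
      rw [map_prod]
      exact Finset.prod_eq_zero hi (by simp)
    simpa [RingHom.mem_ker] using this
  have := hle h1
  simp [RingHom.mem_ker] at this

lemma key_deg (hΔ : ∀ σ ∈ Δ, ∀ τ' ⊆ σ, τ' ∈ Δ) (hτ : τ ∈ Δ) (q : P N) (hq : q ∈ J Δ τ)
    (hdeg : q.degree < (τ.card : WithBot ℕ)) :
    q.coeff 0 ∈ IΔ Δ ∧ ∀ k, k ≠ 0 → q.coeff k ∈ KK Δ τ := by
  obtain ⟨m, hm, g, hg, rfl⟩ := Submodule.mem_sup.mp (J_le_sup Δ τ hq)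
  obtain ⟨h, rfl⟩ := Ideal.mem_span_singleton'.mp hg
  haveI : Nontrivial (R N ⧸ KK Δ τ) := Ideal.Quotient.nontrivial_iff.mpr (KK_ne_top Δ τ hτ)
  set φ := Ideal.Quotient.mk (KK Δ τ) with hφ
  have hsup : IΔ Δ ⊔ KK Δ τ = KK Δ τ := sup_eq_right.mpr (IΔ_le_KK Δ τ hΔ)
  have hmK : ∀ k, m.coeff k ∈ KK Δ τ := by
    intro k
    by_cases hk : k = 0
    · subst hk; exact IΔ_le_KK Δ τ hΔ hm.1
    · exact hsup ▸ hm.2 k hk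
  have hmap_m : m.map φ = 0 := by
    ext n
    simp [Polynomial.coeff_map, Ideal.Quotient.eq_zero_iff_mem.mpr (hmK n)]
    exact Ideal.Quotient.eq_zero_iff_mem.mpr (hmK n)
  have hGm : ((G τ).map φ).Monic := (G_monic τ).map φ
  have hq_map : (m + h * G τ).map φ = (h.map φ) * ((G τ).map φ) := by
    rw [Polynomial.map_add, Polynomial.map_mul, hmap_m, zero_add]
  have hdeg2 : ((m + h * G τ).map φ).degree < ((G τ).map φ).degree := by
    rw [(G_monic τ).degree_map φ, G_degree]
    exact lt_of_le_of_lt Polynomial.degree_map_le hdeg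
  have hdvd : ((G τ).map φ) ∣ ((m + h * G τ).map φ) := ⟨h.map φ, by rw [hq_map, ← Polynomial.map_mul, ← Polynomial.map_mul, mul_comm h]⟩
  have hq0 : (m + h * G τ).map φ = 0 := by
    rw [← (Polynomial.modByMonic_eq_self_iff hGm).mpr hdeg2,
      (Polynomial.modByMonic_eq_zero_iff_dvd hGm).mpr hdvd]
  have hh0 : h.map φ = 0 := by
    have h2 : ((G τ).map φ) * (h.map φ) = 0 := by
      rw [← hq0, hq_map, ← Polynomial.map_mul, ← Polynomial.map_mul, mul_comm (G τ)]
    exact (hGm.mul_right_eq_zero_iff).mp h2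
  have hhK : ∀ k, h.coeff k ∈ KK Δ τ := by
    intro k
    have : (h.map φ).coeff k = 0 := by rw [hh0]; simp
    rw [Polynomial.coeff_map] at this
    exact Ideal.Quotient.eq_zero_iff_mem.mp this
  constructor
  · rw [Polynomial.coeff_add, Polynomial.mul_coeff_zero, G_coeff_zero]
    have h3 : h.coeff 0 * ((-1 : R N) ^ τ.card * ∏ i ∈ τ, X i)
        = (-1 : R N) ^ τ.card * ((∏ i ∈ τ, X i) * h.coeff 0) := by ring
    rw [h3]
    exact add_mem hm.1 (Ideal.mul_mem_left _ _ (mtau_mul_KK Δ τ _ (hhK 0)))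
  · intro k hk
    rw [Polynomial.coeff_add]
    refine add_mem (hmK k) ?_
    rw [Polynomial.coeff_mul]
    refine Submodule.sum_mem _ ?_
    rintro ⟨i, j⟩ hij
    exact Ideal.mul_mem_right _ _ (hhK i)

lemma C_mem_J (p : R N) (hp : p ∈ IΔ Δ) : Polynomial.C p ∈ J Δ τ := by
  induction hp using Submodule.span_induction with
  | mem x hxx => obtain ⟨S, hS, rfl⟩ := hxx; exact CmS_mem Δ τ S hS
  | zero => rw [map_zero]; exact zero_mem _
  | add x y _ _ hx hy => rw [map_add]; exact add_mem hx hy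
  | smul r x _ hx =>
    rw [smul_eq_mul, map_mul]
    exact Ideal.mul_mem_left _ _ hx

lemma XC_mem_J (p : R N) (hp : p ∈ KK Δ τ) : Polynomial.X * Polynomial.C p ∈ J Δ τ := by
  induction hp using Submodule.span_induction with
  | mem x hxx => obtain ⟨S, hS, rfl⟩ := hxx; exact XCmS_mem Δ τ S hS
  | zero => rw [map_zero, mul_zero]; exact zero_mem _
  | add x y _ _ hx hy => rw [map_add, mul_add]; exact add_mem hx hy
  | smul r x _ hx =>
    have heq : Polynomial.X * Polynomial.C (r • x)
        = Polynomial.C r * (Polynomial.X * Polynomial.C x) := by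
      rw [smul_eq_mul, map_mul]; ring
    rw [heq]
    exact Ideal.mul_mem_left _ _ hx

lemma XkC_mem_J (k : ℕ) (p : R N) (hp : (k = 0 ∧ p ∈ IΔ Δ) ∨ (k ≠ 0 ∧ p ∈ KK Δ τ)) :
    Polynomial.X ^ k * Polynomial.C p ∈ J Δ τ := by
  rcases hp with ⟨rfl, hp⟩ | ⟨hk, hp⟩
  · rw [pow_zero, one_mul]; exact C_mem_J Δ τ p hp
  · obtain ⟨j, rfl⟩ := Nat.exists_eq_succ_of_ne_zero hk
    have heq : (Polynomial.X : P N) ^ (j + 1) * Polynomial.C p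
        = Polynomial.X ^ j * (Polynomial.X * Polynomial.C p) := by ring
    rw [heq]
    exact Ideal.mul_mem_left _ _ (XC_mem_J Δ τ p hp)

end SR16

set_option maxHeartbeats 1600000 in
set_option synthInstance.maxHeartbeats 1000000 in
open SR16 in
/-- the substitution `∂_i ↦ ∂_i + ∂_0` (`i ∈ τ`), `∂_i ↦ ∂_i` (`i ∉ τ`)
induces a well-defined injective ring homomorphism `π* : 𝒜(Δ) → 𝒜(Δ̂)` of
Stanley–Reisner rings, and `𝒜(Δ̂)` is the internal direct sum of the subspaces
`∂_0^k · π*(𝒜(Δ))` for `k = 0, 1, …, j−1`, where `j = |τ| ≥ 2`. -/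
theorem stmt16 (N : ℕ) (Δ : Finset (Finset (Fin N)))
    (hΔ : ∀ σ ∈ Δ, ∀ τ' ⊆ σ, τ' ∈ Δ)
    (τ : Finset (Fin N)) (hτ : τ ∈ Δ) (hj : 2 ≤ τ.card) :
    ∃ π : (MvPolynomial (Fin N) ℝ ⧸ srIdealOf (Fin N) (· ∈ Δ)) →ₐ[ℝ]
        (MvPolynomial (Option (Fin N)) ℝ ⧸
          srIdealOf (Option (Fin N)) (starSubdivFace N Δ τ)),
      (∀ p : MvPolynomial (Fin N) ℝ,
        π (Ideal.Quotient.mk (srIdealOf (Fin N) (· ∈ Δ)) p) =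
          Ideal.Quotient.mk (srIdealOf (Option (Fin N)) (starSubdivFace N Δ τ))
            (aeval (fun i : Fin N =>
              if i ∈ τ then X (some i) + X (none : Option (Fin N)) else X (some i)) p)) ∧
      Function.Injective π ∧
      (iSup (fun k : Fin τ.card =>
        Submodule.map
          (LinearMap.mulLeft ℝ
            ((Ideal.Quotient.mk (srIdealOf (Option (Fin N)) (starSubdivFace N Δ τ))
                (X (none : Option (Fin N)))) ^ (k : ℕ)))
          (LinearMap.range π.toLinearMap)) = ⊤) ∧
      iSupIndep (fun k : Fin τ.card =>
        Submodule.map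
          (LinearMap.mulLeft ℝ
            ((Ideal.Quotient.mk (srIdealOf (Option (Fin N)) (starSubdivFace N Δ τ))
                (X (none : Option (Fin N)))) ^ (k : ℕ)))
          (LinearMap.range π.toLinearMap)) := by
  classical
  suffices h : ∃ π : (MvPolynomial (Fin N) ℝ ⧸ IΔ Δ) →ₐ[ℝ]
        (MvPolynomial (Option (Fin N)) ℝ ⧸ Ih Δ τ),
      (∀ p : MvPolynomial (Fin N) ℝ,
        π (Ideal.Quotient.mk (IΔ Δ) p) =
          Ideal.Quotient.mk (Ih Δ τ) (ψ τ p)) ∧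
      Function.Injective π ∧
      (iSup (fun k : Fin τ.card =>
        Submodule.map
          (LinearMap.mulLeft ℝ
            ((Ideal.Quotient.mk (Ih Δ τ) (X (none : Option (Fin N)))) ^ (k : ℕ)))
          (LinearMap.range π.toLinearMap)) = ⊤) ∧
      iSupIndep (fun k : Fin τ.card =>
        Submodule.map
          (LinearMap.mulLeft ℝ
            ((Ideal.Quotient.mk (Ih Δ τ) (X (none : Option (Fin N)))) ^ (k : ℕ)))
          (LinearMap.range π.toLinearMap)) by
    exact h
  have hwell : ∀ a ∈ IΔ Δ, ((Ideal.Quotient.mkₐ ℝ (Ih Δ τ)).comp (ψ τ)) a = 0 := by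
    intro a ha
    simp only [AlgHom.comp_apply, Ideal.Quotient.mkₐ_eq_mk]
    rw [Ideal.Quotient.eq_zero_iff_mem, mem_Ih_iff Δ τ hΔ, ρ_ψ]
    exact C_mem_J Δ τ a ha
  set π : (MvPolynomial (Fin N) ℝ ⧸ IΔ Δ) →ₐ[ℝ]
      (MvPolynomial (Option (Fin N)) ℝ ⧸ Ih Δ τ) :=
    Ideal.Quotient.liftₐ (IΔ Δ) ((Ideal.Quotient.mkₐ ℝ (Ih Δ τ)).comp (ψ τ)) hwell with hπdef
  have hπmk : ∀ p : MvPolynomial (Fin N) ℝ,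
      π (Ideal.Quotient.mk (IΔ Δ) p) = Ideal.Quotient.mk (Ih Δ τ) (ψ τ p) := by
    intro p
    rw [hπdef]
    exact Ideal.Quotient.lift_mk (IΔ Δ) _ _
  have hinj : Function.Injective π := by
    rw [injective_iff_map_eq_zero π]
    intro a ha
    obtain ⟨p, rfl⟩ := Ideal.Quotient.mk_surjective a
    rw [hπmk] at ha
    have h1 : ψ τ p ∈ Ih Δ τ := Ideal.Quotient.eq_zero_iff_mem.mp ha
    rw [mem_Ih_iff Δ τ hΔ, ρ_ψ] at h1
    have hdeg : (Polynomial.C p : P N).degree < (τ.card : WithBot ℕ) :=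
      lt_of_le_of_lt Polynomial.degree_C_le (by exact_mod_cast (show 0 < τ.card by omega))
    have h2 := (key_deg Δ τ hΔ hτ _ h1 hdeg).1
    rw [Polynomial.coeff_C, if_pos rfl] at h2
    exact Ideal.Quotient.eq_zero_iff_mem.mpr h2
  have hspan : (iSup (fun k : Fin τ.card =>
      Submodule.map
        (LinearMap.mulLeft ℝ
          ((Ideal.Quotient.mk (Ih Δ τ) (X (none : Option (Fin N)))) ^ (k : ℕ)))
        (LinearMap.range π.toLinearMap)) = ⊤) := by
    rw [eq_top_iff]
    rintro x -
    obtain ⟨qh, rfl⟩ := Ideal.Quotient.mk_surjective x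
    set q : P N := ρ τ qh with hq
    set r := q %ₘ G τ with hrdef
    have hmem : qh - (ρ τ).symm r ∈ Ih Δ τ := by
      rw [mem_Ih_iff Δ τ hΔ, map_sub, AlgEquiv.apply_symm_apply]
      have h1 : q - r = G τ * (q /ₘ G τ) := by
        rw [hrdef, Polynomial.modByMonic_eq_sub_mul_div _ (G τ)]; ring
      rw [h1]
      exact Ideal.mul_mem_right _ _ (G_mem Δ τ)
    have hdegr : r.natDegree < τ.card := by
      by_cases h0 : r = 0
      · rw [h0, Polynomial.natDegree_zero]; omega
      · refine (Polynomial.natDegree_lt_iff_degree_lt h0).mpr ?_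
        have h2 := Polynomial.degree_modByMonic_lt q (G_monic τ)
        rwa [G_degree] at h2
    have hr_eq := Polynomial.as_sum_range' r τ.card hdegr
    have hsymm : (ρ τ).symm r
        = ∑ k ∈ Finset.range τ.card, (X none : Rh N) ^ k * ψ τ (r.coeff k) := by
      rw [AlgEquiv.symm_apply_eq, map_sum]
      conv_lhs => rw [hr_eq]
      refine Finset.sum_congr rfl fun k _ => ?_
      rw [map_mul, map_pow, ρ_X_none, ρ_ψ, mul_comm, Polynomial.C_mul_X_pow_eq_monomial]
    have heq : Ideal.Quotient.mk (Ih Δ τ) qh = Ideal.Quotient.mk (Ih Δ τ) ((ρ τ).symm r) :=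
      Ideal.Quotient.eq.mpr hmem
    rw [heq, hsymm, map_sum]
    refine Submodule.sum_mem _ fun k hk => ?_
    have hk' := Finset.mem_range.mp hk
    refine Submodule.mem_iSup_of_mem ⟨k, hk'⟩ ?_
    rw [map_mul, map_pow]
    refine Submodule.mem_map.mpr
      ⟨π (Ideal.Quotient.mk (IΔ Δ) (r.coeff k)),
        LinearMap.mem_range.mpr ⟨Ideal.Quotient.mk (IΔ Δ) (r.coeff k), rfl⟩, ?_⟩
    rw [LinearMap.mulLeft_apply, hπmk]
  have hindep : iSupIndep (fun k : Fin τ.card =>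
      Submodule.map
        (LinearMap.mulLeft ℝ
          ((Ideal.Quotient.mk (Ih Δ τ) (X (none : Option (Fin N)))) ^ (k : ℕ)))
        (LinearMap.range π.toLinearMap)) := by
    rw [iSupIndep_iff_dfinsupp_lsum_injective, ← LinearMap.ker_eq_bot, LinearMap.ker_eq_bot']
    intro f hf
    have hval : ∀ l : Fin τ.card, ∃ p : MvPolynomial (Fin N) ℝ,
        ((f l : MvPolynomial (Option (Fin N)) ℝ ⧸ Ih Δ τ))
          = (Ideal.Quotient.mk (Ih Δ τ) (X (none : Option (Fin N)))) ^ (l : ℕ)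
            * Ideal.Quotient.mk (Ih Δ τ) (ψ τ p) := by
      intro l
      obtain ⟨y, hy, hxy⟩ := Submodule.mem_map.mp (f l).2
      obtain ⟨a, rfl⟩ := LinearMap.mem_range.mp hy
      obtain ⟨p, rfl⟩ := Ideal.Quotient.mk_surjective a
      refine ⟨p, ?_⟩
      rw [← hxy, LinearMap.mulLeft_apply]
      have h5 : π.toLinearMap (Ideal.Quotient.mk (IΔ Δ) p)
          = Ideal.Quotient.mk (Ih Δ τ) (ψ τ p) := hπmk p
      rw [h5]
    choose pfun hp using hval
    set Q : Rh N := ∑ l : Fin τ.card, (X none : Rh N) ^ (l : ℕ) * ψ τ (pfun l) with hQdef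
    have hmkQ : Ideal.Quotient.mk (Ih Δ τ) Q = 0 := by
      rw [hQdef, map_sum]
      have h1 : ∑ l : Fin τ.card,
          Ideal.Quotient.mk (Ih Δ τ) ((X none : Rh N) ^ (l : ℕ) * ψ τ (pfun l))
          = ∑ l : Fin τ.card, ((f l : MvPolynomial (Option (Fin N)) ℝ ⧸ Ih Δ τ)) := by
        refine Finset.sum_congr rfl fun l _ => ?_
        rw [hp l, map_mul, map_pow]
      rw [h1]
      have h2 : ∑ l ∈ f.support, ((f l : MvPolynomial (Option (Fin N)) ℝ ⧸ Ih Δ τ))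
          = ∑ l : Fin τ.card, ((f l : MvPolynomial (Option (Fin N)) ℝ ⧸ Ih Δ τ)) :=
        Finset.sum_subset (Finset.subset_univ _)
          (fun x _ hx => by rw [DFinsupp.notMem_support_iff.mp hx]; simp)
      rw [← h2]
      have h3 := hf
      rw [DFinsupp.lsum_apply_apply, DFinsupp.sumAddHom_apply] at h3
      exact h3
    have hQmem : Q ∈ Ih Δ τ := Ideal.Quotient.eq_zero_iff_mem.mp hmkQ
    have hJQ : ρ τ Q ∈ J Δ τ := (mem_Ih_iff Δ τ hΔ Q).mp hQmem
    have hρQ : ρ τ Q = ∑ l : Fin τ.card, Polynomial.X ^ (l : ℕ) * Polynomial.C (pfun l) := by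
      rw [hQdef, map_sum]
      refine Finset.sum_congr rfl fun l _ => ?_
      rw [map_mul, map_pow, ρ_X_none, ρ_ψ]
    have hdeg : (ρ τ Q).degree < (τ.card : WithBot ℕ) := by
      rw [hρQ]
      refine lt_of_le_of_lt (Polynomial.degree_sum_le _ _) ?_
      rw [Finset.sup_lt_iff (WithBot.bot_lt_coe _)]
      intro b _
      calc (Polynomial.X ^ (b : ℕ) * Polynomial.C (pfun b) : P N).degree
          ≤ (Polynomial.X ^ (b : ℕ) : P N).degree + (Polynomial.C (pfun b) : P N).degree :=
            Polynomial.degree_mul_le _ _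
        _ ≤ (((b : ℕ) : WithBot ℕ)) + 0 :=
            add_le_add (le_of_eq (Polynomial.degree_X_pow _)) Polynomial.degree_C_le
        _ = (((b : ℕ) : WithBot ℕ)) := add_zero _
        _ < _ := by exact_mod_cast b.isLt
    have hkey := key_deg Δ τ hΔ hτ _ hJQ hdeg
    have hcoeff : ∀ l : Fin τ.card, (ρ τ Q).coeff (l : ℕ) = pfun l := by
      intro l
      rw [hρQ, Polynomial.finset_sum_coeff]
      have h1 : ∀ b : Fin τ.card,
          (Polynomial.X ^ (b : ℕ) * Polynomial.C (pfun b) : P N).coeff (l : ℕ)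
          = if b = l then pfun b else 0 := by
        intro b
        rw [mul_comm, Polynomial.C_mul_X_pow_eq_monomial, Polynomial.coeff_monomial]
        by_cases hbl : b = l
        · subst hbl; simp
        · rw [if_neg (fun hc => hbl (Fin.val_injective hc)), if_neg hbl]
      rw [Finset.sum_congr rfl (fun b _ => h1 b), Finset.sum_ite_eq' Finset.univ l pfun]
      simp
    have hterm : ∀ l : Fin τ.card,
        ((f l : MvPolynomial (Option (Fin N)) ℝ ⧸ Ih Δ τ)) = 0 := by
      intro l
      rw [hp l]
      have hmem2 : (X none : Rh N) ^ (l : ℕ) * ψ τ (pfun l) ∈ Ih Δ τ := by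
        rw [mem_Ih_iff Δ τ hΔ, map_mul, map_pow, ρ_X_none, ρ_ψ]
        refine XkC_mem_J Δ τ _ _ ?_
        by_cases hl : (l : ℕ) = 0
        · left
          refine ⟨hl, ?_⟩
          have h4 := hkey.1
          rw [← hcoeff l, hl]
          exact h4
        · right
          exact ⟨hl, by rw [← hcoeff l]; exact hkey.2 _ hl⟩
      rw [← map_pow, ← map_mul, Ideal.Quotient.eq_zero_iff_mem]
      exact hmem2
    ext l
    rw [hterm l]
    simp
  exact ⟨π, hπmk, hinj, hspan, hindep⟩
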